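/- Let 𝒳 be an affine subset of a vector space X with direction subspace X₀, J: 𝒳 → ℝ^d, C ⊆ ℝ^d a nonempty closed convex cone with C ≠ ℝ^d, and suppose the set-valued map y ↦ J(y) + C is convex and M ⊆ 𝒳 is nonempty convex. If for every ζ ∈ C⁺ \ {0}, the point 0 minimizes v ↦ inf_{y∈M} ζ·J(y+v) over X₀, then M is an infimizer: cl co ⋃_{y∈M}(J(y)+C) ⊇ {J(y) : y ∈ 𝒳}. -/

import Mathlib

open Pointwise

/-- Lemma 3.1, second part: if `y ↦ J(y)+C` is convex on the affine set `𝒳`,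
`M ⊆ 𝒳` is nonempty and convex, and for every `ζ ∈ C⁺ \ {0}` the point `0` minimizes
`v ↦ inf_{y∈M} ζ·J(y+v)` over `X₀`, then `M` is an infimizer:
`cl co ⋃_{y∈M} (J(y)+C) ⊇ {J(y) : y ∈ 𝒳}`. -/
theorem stmt8 {d : ℕ} {X : Type*} [AddCommGroup X] [Module ℝ X]
    (C : Set (EuclideanSpace ℝ (Fin d)))
    (hCne : C.Nonempty) (hCclosed : IsClosed C) (hCconv : Convex ℝ C)
    (hCcone : ∀ c ∈ C, ∀ s : ℝ, 0 ≤ s → s • c ∈ C)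
    (hCproper : C ≠ Set.univ)
    (X0 : Submodule ℝ X) (𝒳 : Set X)
    (h𝒳add : ∀ y ∈ 𝒳, ∀ v ∈ X0, y + v ∈ 𝒳)
    (h𝒳sub : ∀ y₁ ∈ 𝒳, ∀ y₂ ∈ 𝒳, y₁ - y₂ ∈ X0)
    (J : X → EuclideanSpace ℝ (Fin d))
    (hJconv : Convex ℝ {p : X × EuclideanSpace ℝ (Fin d) | p.1 ∈ 𝒳 ∧ p.2 ∈ {J p.1} + C})
    (M : Set X) (hM : M ⊆ 𝒳) (hMne : M.Nonempty) (hMconv : Convex ℝ M)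
    (hmin : ∀ ζ : EuclideanSpace ℝ (Fin d), (∀ c ∈ C, 0 ≤ (inner ℝ ζ c : ℝ)) → ζ ≠ 0 →
      ∀ v ∈ X0,
        sInf ((fun y => ((inner ℝ ζ (J y) : ℝ) : EReal)) '' M) ≤
          sInf ((fun y => ((inner ℝ ζ (J (y + v)) : ℝ) : EReal)) '' M)) :
    ∀ y ∈ 𝒳, J y ∈ closure (convexHull ℝ (⋃ y' ∈ M, ({J y'} + C))) := by
  intro y hy
  by_contra hnot
  set S := closure (convexHull ℝ (⋃ y' ∈ M, ({J y'} + C))) with hS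
  have hSconv : Convex ℝ S := (convex_convexHull ℝ _).closure
  have hSclosed : IsClosed S := isClosed_closure
  obtain ⟨f, u, hfy, hfS⟩ := geometric_hahn_banach_point_closed hSconv hSclosed hnot
  set ζ := (InnerProductSpace.toDual ℝ (EuclideanSpace ℝ (Fin d))).symm f with hζdef
  have hζ : ∀ z, (inner ℝ ζ z : ℝ) = f z := fun z =>
    InnerProductSpace.toDual_symm_apply
  obtain ⟨c₀, hc₀⟩ := hCne
  have h0C : (0 : EuclideanSpace ℝ (Fin d)) ∈ C := by
    simpa using hCcone c₀ hc₀ 0 le_rfl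
  obtain ⟨y₀, hy₀⟩ := hMne
  -- membership in S
  have hmemS : ∀ y' ∈ M, ∀ c ∈ C, J y' + c ∈ S := by
    intro y' hy' c hc
    apply subset_closure
    apply subset_convexHull
    refine Set.mem_iUnion₂.2 ⟨y', hy', ?_⟩
    exact Set.add_mem_add (Set.mem_singleton _) hc
  -- ζ is in the dual cone
  have hdual : ∀ c ∈ C, 0 ≤ (inner ℝ ζ c : ℝ) := by
    intro c hc
    by_contra hneg
    push_neg at hneg
    set ic : ℝ := (inner ℝ ζ c : ℝ) with hicdef
    have hic : ic < 0 := hneg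
    set t : ℝ := (f (J y₀) - u + 1) / (-ic) with ht
    have hnum : 0 < f (J y₀) - u + 1 := by
      have := hfS _ (by simpa using hmemS y₀ hy₀ 0 h0C)
      linarith
    have htpos : 0 ≤ t := le_of_lt (div_pos hnum (by linarith))
    have htc : t • c ∈ C := hCcone c hc t htpos
    have := hfS _ (hmemS y₀ hy₀ _ htc)
    have hfval : f (J y₀ + t • c) = f (J y₀) + t * ic := by
      rw [map_add, map_smul]
      rw [hicdef, hζ c, smul_eq_mul]
    rw [hfval] at this
    have hne : ic ≠ 0 := ne_of_lt hic
    have htic : t * ic = -(f (J y₀) - u + 1) := by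
      rw [ht, div_mul_eq_mul_div, mul_div_assoc, div_neg, div_self hne]; ring
    rw [htic] at this
    linarith
  have hζne : ζ ≠ 0 := by
    intro h0
    have h1 := hfS _ (by simpa using hmemS y₀ hy₀ 0 h0C)
    have h2 : f (J y₀) = 0 := by rw [← hζ (J y₀), h0]; simp
    have h3 : f (J y) = 0 := by rw [← hζ (J y), h0]; simp
    rw [h3] at hfy
    rw [h2] at h1
    linarith
  have hv : y - y₀ ∈ X0 := h𝒳sub y hy y₀ (hM hy₀)
  have hkey := hmin ζ hdual hζne (y - y₀) hv
  have hlb : (u : EReal) ≤ sInf ((fun y => ((inner ℝ ζ (J y) : ℝ) : EReal)) '' M) := by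
    apply le_sInf
    rintro a ⟨y', hy', rfl⟩
    have h := hfS _ (by simpa using hmemS y' hy' 0 h0C)
    rw [← hζ (J y')] at h
    show (u : EReal) ≤ ((inner ℝ ζ (J y') : ℝ) : EReal)
    exact_mod_cast le_of_lt h
  have hub : sInf ((fun y' => ((inner ℝ ζ (J (y' + (y - y₀))) : ℝ) : EReal)) '' M)
      ≤ ((inner ℝ ζ (J y) : ℝ) : EReal) := by
    apply sInf_le
    refine ⟨y₀, hy₀, ?_⟩
    show ((inner ℝ ζ (J (y₀ + (y - y₀))) : ℝ) : EReal) = _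
    have h : y₀ + (y - y₀) = y := by abel
    rw [h]
  have : (u : EReal) ≤ ((inner ℝ ζ (J y) : ℝ) : EReal) := le_trans hlb (le_trans hkey hub)
  have hreal : u ≤ (inner ℝ ζ (J y) : ℝ) := by exact_mod_cast this
  rw [hζ (J y)] at hreal
  linarith
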